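/- arXiv:1507.07995 — 2 statements merged into one kernel-verified Lean document; each statement's English description precedes it below -/
import Mathlib

section
/- For all real numbers r > 0, k ≤ 0, n ≥ 2 a natural number, and t ∈ [0,1], one has (1-t)·log S((1-t)r; k) + t·log S(tr; k) − log S(r; k) − (t(1-t)/2)·(k/(n-1))·r² ≥ 0, where S(s;k) = sinh(s·√(−k/(n−1)))/(s·√(−k/(n−1))) for k < 0 and S(s;0) = 1 (with the convention S(0;k)=1). -/
/-- The comparison function `S(s;k)` for `k ≤ 0`: `sinh(s√(-k/(n-1)))/(s√(-k/(n-1)))`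
when `k < 0` and `s ≠ 0`, and `1` otherwise. -/
noncomputable def Scomp (n : ℕ) (k s : ℝ) : ℝ :=
  if k < 0 ∧ s ≠ 0 then
    Real.sinh (s * Real.sqrt (-k / (n - 1))) / (s * Real.sqrt (-k / (n - 1)))
  else 1

private lemma sinh_core {x : ℝ} (hx : 0 < x) :
    2 * x * Real.cosh x * Real.sinh x - Real.sinh x ^ 2 - x ^ 2
      ≤ x ^ 2 * Real.sinh x ^ 2 := by
  have h1 : Real.exp x * Real.exp (-x) = 1 := by
    rw [← Real.exp_add]; simp
  rw [Real.cosh_eq, Real.sinh_eq]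
  nlinarith [sq_nonneg (Real.exp x * (1 - x) - Real.exp (-x) * (1 + x)), h1]

private lemma sinh_core2 {x : ℝ} (hx : 0 < x) :
    2 * Real.cosh x / Real.sinh x - 1 / x - x / Real.sinh x ^ 2 ≤ x := by
  have hs : 0 < Real.sinh x := Real.sinh_pos_iff.2 hx
  have h := sinh_core hx
  have hden : (0:ℝ) < x * Real.sinh x ^ 2 := by positivity
  have key : x - (2 * Real.cosh x / Real.sinh x - 1 / x - x / Real.sinh x ^ 2)
      = (x ^ 2 * Real.sinh x ^ 2
          - (2 * x * Real.cosh x * Real.sinh x - Real.sinh x ^ 2 - x ^ 2))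
        / (x * Real.sinh x ^ 2) := by
    field_simp
  have hnum : 0 ≤ (x ^ 2 * Real.sinh x ^ 2
      - (2 * x * Real.cosh x * Real.sinh x - Real.sinh x ^ 2 - x ^ 2))
        / (x * Real.sinh x ^ 2) := div_nonneg (by linarith) hden.le
  linarith [key ▸ hnum]

private noncomputable def Dfun (a u : ℝ) : ℝ :=
  Real.cosh (u * a) * a / Real.sinh (u * a) - 1 / u

private noncomputable def DDfun (a u : ℝ) : ℝ :=
  -(a ^ 2 / Real.sinh (u * a) ^ 2) + 1 / u ^ 2

private lemma Dfun_bound {a u : ℝ} (ha : 0 < a) (hu : 0 < u) :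
    2 * Dfun a u + u * DDfun a u ≤ a ^ 2 * u := by
  have hx : 0 < u * a := mul_pos hu ha
  have hs : 0 < Real.sinh (u * a) := Real.sinh_pos_iff.2 hx
  have h := sinh_core2 hx
  have e : 2 * Dfun a u + u * DDfun a u
      = a * (2 * Real.cosh (u * a) / Real.sinh (u * a) - 1 / (u * a)
          - (u * a) / Real.sinh (u * a) ^ 2) := by
    unfold Dfun DDfun
    field_simp
    ring
  rw [e]
  calc a * (2 * Real.cosh (u * a) / Real.sinh (u * a) - 1 / (u * a)
          - (u * a) / Real.sinh (u * a) ^ 2)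
      ≤ a * (u * a) := by
        exact mul_le_mul_of_nonneg_left h ha.le
    _ = a ^ 2 * u := by ring

private noncomputable def Wfun (a : ℝ) : ℝ → ℝ :=
  fun s => Real.log (if s = 0 then 1 else Real.sinh (s * a) / (s * a))

private lemma gfun_pos {a : ℝ} (ha : 0 < a) (s : ℝ) :
    0 < (if s = 0 then 1 else Real.sinh (s * a) / (s * a)) := by
  by_cases h : s = 0
  · simp [h]
  · rw [if_neg h]
    rcases lt_or_gt_of_ne h with hlt | hgt
    · have h1 : s * a < 0 := mul_neg_of_neg_of_pos hlt ha
      exact div_pos_iff.2 (Or.inr ⟨Real.sinh_neg_iff.2 h1, h1⟩)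
    · have h1 : 0 < s * a := mul_pos hgt ha
      exact div_pos (Real.sinh_pos_iff.2 h1) h1

private lemma gfun_continuous {a : ℝ} (ha : 0 < a) :
    Continuous (fun s : ℝ => if s = 0 then 1 else Real.sinh (s * a) / (s * a)) := by
  rw [continuous_iff_continuousAt]
  intro s
  by_cases h : s = 0
  · subst h
    rw [← continuousWithinAt_compl_self]
    have h1 : Filter.Tendsto (fun y : ℝ => Real.sinh y / y) (nhdsWithin 0 {(0:ℝ)}ᶜ)
        (nhds 1) := by
      have h0 := Real.hasDerivAt_sinh 0
      rw [hasDerivAt_iff_tendsto_slope] at h0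
      simp only [Real.cosh_zero] at h0
      refine h0.congr (fun y => ?_)
      simp [slope_def_field, div_eq_inv_mul]
    have h2 : Filter.Tendsto (fun s : ℝ => s * a) (nhdsWithin 0 {(0:ℝ)}ᶜ)
        (nhdsWithin 0 {(0:ℝ)}ᶜ) := by
      rw [tendsto_nhdsWithin_iff]
      constructor
      · have : Filter.Tendsto (fun s : ℝ => s * a) (nhds 0) (nhds (0 * a)) :=
          (continuous_id.mul continuous_const).tendsto 0
        simpa using this.mono_left nhdsWithin_le_nhds
      · filter_upwards [self_mem_nhdsWithin] with x hx
        exact mul_ne_zero hx ha.ne'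
    have h3 : Filter.Tendsto (fun s : ℝ => Real.sinh (s * a) / (s * a))
        (nhdsWithin 0 {(0:ℝ)}ᶜ) (nhds 1) := h1.comp h2
    have : ContinuousWithinAt (fun s : ℝ => if s = 0 then 1 else Real.sinh (s * a) / (s * a))
        {(0:ℝ)}ᶜ 0 := by
      unfold ContinuousWithinAt
      rw [show ((fun s : ℝ => if s = 0 then (1:ℝ) else Real.sinh (s * a) / (s * a)) 0) = 1 from by norm_num]
      refine h3.congr' ?_
      filter_upwards [self_mem_nhdsWithin] with x hx
      have hx0 : x ≠ 0 := hx
      rw [if_neg hx0]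
    exact this
  · have hopen : {(0:ℝ)}ᶜ ∈ nhds s := isOpen_compl_singleton.mem_nhds h
    have hc : ContinuousAt (fun s : ℝ => Real.sinh (s * a) / (s * a)) s := by
      refine ContinuousAt.div ?_ ?_ (mul_ne_zero h ha.ne')
      · exact (Real.continuous_sinh.comp (continuous_id.mul continuous_const)).continuousAt
      · exact (continuous_id.mul continuous_const).continuousAt
    refine hc.congr ?_
    filter_upwards [hopen] with x hx
    have hx0 : x ≠ 0 := hx
    rw [if_neg hx0]

private lemma Wfun_continuous {a : ℝ} (ha : 0 < a) : Continuous (Wfun a) := by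
  unfold Wfun
  exact (gfun_continuous ha).log (fun s => (gfun_pos ha s).ne')

private lemma Wfun_hasDerivAt {a u : ℝ} (ha : 0 < a) (hu : 0 < u) :
    HasDerivAt (Wfun a) (Dfun a u) u := by
  have hx : 0 < u * a := mul_pos hu ha
  have hs : 0 < Real.sinh (u * a) := Real.sinh_pos_iff.2 hx
  have h1 : HasDerivAt (fun s : ℝ => s * a) a u := by
    simpa using (hasDerivAt_id u).mul_const a
  have h2 : HasDerivAt (fun s : ℝ => Real.sinh (s * a)) (Real.cosh (u * a) * a) u :=
    by have := (Real.hasDerivAt_sinh (u * a)).comp u h1; exact this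
  have h3 : HasDerivAt (fun s : ℝ => Real.log (Real.sinh (s * a)))
      (Real.cosh (u * a) * a / Real.sinh (u * a)) u := h2.log hs.ne'
  have h4 : HasDerivAt (fun s : ℝ => Real.log (s * a)) (1 / u) u := by
    have := h1.log hx.ne'
    convert this using 1
    field_simp
  have h5 : HasDerivAt (fun s : ℝ => Real.log (Real.sinh (s * a)) - Real.log (s * a))
      (Dfun a u) u := by
    unfold Dfun
    exact h3.sub h4
  refine h5.congr_of_eventuallyEq ?_
  filter_upwards [isOpen_Ioi.mem_nhds hu] with x hx'
  have hx0 : (x:ℝ) ≠ 0 := (ne_of_gt hx')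
  have hxa : 0 < x * a := mul_pos hx' ha
  unfold Wfun
  rw [if_neg hx0, Real.log_div (Real.sinh_pos_iff.2 hxa).ne' hxa.ne']

private lemma Dfun_hasDerivAt {a u : ℝ} (ha : 0 < a) (hu : 0 < u) :
    HasDerivAt (Dfun a) (DDfun a u) u := by
  have hx : 0 < u * a := mul_pos hu ha
  have hs : 0 < Real.sinh (u * a) := Real.sinh_pos_iff.2 hx
  have h1 : HasDerivAt (fun s : ℝ => s * a) a u := by
    simpa using (hasDerivAt_id u).mul_const a
  have h2 : HasDerivAt (fun s : ℝ => Real.sinh (s * a)) (Real.cosh (u * a) * a) u :=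
    by have := (Real.hasDerivAt_sinh (u * a)).comp u h1; exact this
  have h2' : HasDerivAt (fun s : ℝ => Real.cosh (s * a)) (Real.sinh (u * a) * a) u :=
    by have := (Real.hasDerivAt_cosh (u * a)).comp u h1; exact this
  have hnum : HasDerivAt (fun s : ℝ => Real.cosh (s * a) * a) (Real.sinh (u * a) * a * a) u :=
    h2'.mul_const a
  have hq : HasDerivAt (fun s : ℝ => Real.cosh (s * a) * a / Real.sinh (s * a))
      ((Real.sinh (u * a) * a * a * Real.sinh (u * a)
        - Real.cosh (u * a) * a * (Real.cosh (u * a) * a)) / Real.sinh (u * a) ^ 2) u :=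
    hnum.div h2 hs.ne'
  have hinv : HasDerivAt (fun s : ℝ => 1 / s) (-(1 / u ^ 2)) u := by
    have := hasDerivAt_inv hu.ne'
    simpa [one_div] using this
  have := hq.sub hinv
  have heq : (Real.sinh (u * a) * a * a * Real.sinh (u * a)
        - Real.cosh (u * a) * a * (Real.cosh (u * a) * a)) / Real.sinh (u * a) ^ 2
        - -(1 / u ^ 2) = DDfun a u := by
    unfold DDfun
    have hid : Real.cosh (u * a) ^ 2 - Real.sinh (u * a) ^ 2 = 1 :=
      Real.cosh_sq_sub_sinh_sq (u * a)
    field_simp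
    linear_combination (-(a ^ 2 * u ^ 2)) * hid
  rw [heq] at this
  exact this.congr_of_eventuallyEq (by
    filter_upwards [isOpen_Ioi.mem_nhds hu] with x hx'
    rfl)

theorem stmt0 (n : ℕ) (hn : 2 ≤ n) (r k t : ℝ) (hr : 0 < r) (hk : k ≤ 0)
    (ht : t ∈ Set.Icc (0 : ℝ) 1) :
    0 ≤ (1 - t) * Real.log (Scomp n k ((1 - t) * r)) + t * Real.log (Scomp n k (t * r))
      - Real.log (Scomp n k r) - (t * (1 - t) / 2) * (k / (n - 1)) * r ^ 2 := by
  obtain ⟨ht0, ht1⟩ := ht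
  rcases eq_or_lt_of_le hk with hk0 | hkneg
  · -- k = 0 case
    subst hk0
    simp [Scomp]
  -- k < 0 case
  have hn1 : (1:ℝ) ≤ (n:ℝ) - 1 := by
    have : (2:ℝ) ≤ (n:ℝ) := by exact_mod_cast hn
    linarith
  have hnpos : (0:ℝ) < (n:ℝ) - 1 := by linarith
  set a : ℝ := Real.sqrt (-k / (n - 1)) with ha_def
  have harg : 0 < -k / ((n:ℝ) - 1) := div_pos (by linarith) hnpos
  have ha : 0 < a := Real.sqrt_pos.2 harg
  have ha2 : a ^ 2 = -k / ((n:ℝ) - 1) := Real.sq_sqrt harg.le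
  have hka : k / ((n:ℝ) - 1) = -a ^ 2 := by
    rw [ha2]; field_simp
  -- relate log Scomp to Wfun
  have hlogS : ∀ s : ℝ, Real.log (Scomp n k s) = Wfun a s := by
    intro s
    by_cases h : s = 0
    · subst h
      simp [Scomp, Wfun]
    · unfold Scomp Wfun
      rw [if_pos ⟨hkneg, h⟩, if_neg h]
  set W := Wfun a with hW_def
  set F : ℝ → ℝ := fun t => (1 - t) * W ((1 - t) * r) + t * W (t * r)
      + t * (1 - t) / 2 * a ^ 2 * r ^ 2 with hF_def
  -- derivatives
  set F1 : ℝ → ℝ := fun t => (-1) * W ((1 - t) * r) + (1 - t) * (Dfun a ((1 - t) * r) * (-r))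
      + (1 * W (t * r) + t * (Dfun a (t * r) * r))
      + (1 * (1 - t) + t * (-1)) / 2 * a ^ 2 * r ^ 2 with hF1_def
  set F2 : ℝ → ℝ := fun t => ((-1) * (Dfun a ((1 - t) * r) * (-r))
        + ((-1) * (Dfun a ((1 - t) * r) * (-r))
          + (1 - t) * (DDfun a ((1 - t) * r) * (-r) * (-r))))
      + ((1 * (Dfun a (t * r) * r)) + (1 * (Dfun a (t * r) * r)
          + t * (DDfun a (t * r) * r * r)))
      + (-(a ^ 2 * r ^ 2)) with hF2_def
  have hmem : ∀ x : ℝ, x ∈ interior (Set.Icc (0:ℝ) 1) → 0 < x ∧ x < 1 := by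
    intro x hx
    rw [interior_Icc] at hx
    exact ⟨hx.1, hx.2⟩
  have hderiv1 : ∀ x ∈ interior (Set.Icc (0:ℝ) 1), HasDerivAt F (F1 x) x := by
    intro x hx
    obtain ⟨hx0, hx1⟩ := hmem x hx
    have hs : 0 < (1 - x) * r := mul_pos (by linarith) hr
    have hu : 0 < x * r := mul_pos hx0 hr
    have c1 : HasDerivAt (fun t : ℝ => (1 - t) * r) (-r) t := by
      simpa using ((hasDerivAt_id t).const_sub 1).mul_const r
    have c1x : HasDerivAt (fun t : ℝ => (1 - t) * r) ((-1) * r) x := by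
      simpa using ((hasDerivAt_id x).const_sub 1).mul_const r
    have c2x : HasDerivAt (fun t : ℝ => t * r) r x := by
      simpa using (hasDerivAt_id x).mul_const r
    have w1 : HasDerivAt (fun t : ℝ => W ((1 - t) * r)) (Dfun a ((1 - x) * r) * (-r)) x := by
      have := (Wfun_hasDerivAt ha hs).comp x (by simpa using c1x)
      exact this
    have w2 : HasDerivAt (fun t : ℝ => W (t * r)) (Dfun a (x * r) * r) x :=
      by have := (Wfun_hasDerivAt ha hu).comp x c2x; exact this
    have l1 : HasDerivAt (fun t : ℝ => (1 : ℝ) - t) (-1) x := by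
      simpa using (hasDerivAt_id x).const_sub 1
    have p1 : HasDerivAt (fun t : ℝ => (1 - t) * W ((1 - t) * r))
        ((-1) * W ((1 - x) * r) + (1 - x) * (Dfun a ((1 - x) * r) * (-r))) x := l1.mul w1
    have p2 : HasDerivAt (fun t : ℝ => t * W (t * r))
        (1 * W (x * r) + x * (Dfun a (x * r) * r)) x := (hasDerivAt_id x).mul w2
    have p3 : HasDerivAt (fun t : ℝ => t * (1 - t) / 2 * a ^ 2 * r ^ 2)
        ((1 * (1 - x) + x * (-1)) / 2 * a ^ 2 * r ^ 2) x :=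
      ((((hasDerivAt_id x).mul l1).div_const 2).mul_const (a ^ 2)).mul_const (r ^ 2)
    exact (p1.add p2).add p3
  have hderiv2 : ∀ x ∈ interior (Set.Icc (0:ℝ) 1), HasDerivAt F1 (F2 x) x := by
    intro x hx
    obtain ⟨hx0, hx1⟩ := hmem x hx
    have hs : 0 < (1 - x) * r := mul_pos (by linarith) hr
    have hu : 0 < x * r := mul_pos hx0 hr
    have c1x : HasDerivAt (fun t : ℝ => (1 - t) * r) ((-1) * r) x := by
      simpa using ((hasDerivAt_id x).const_sub 1).mul_const r
    have c2x : HasDerivAt (fun t : ℝ => t * r) r x := by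
      simpa using (hasDerivAt_id x).mul_const r
    have l1 : HasDerivAt (fun t : ℝ => (1 : ℝ) - t) (-1) x := by
      simpa using (hasDerivAt_id x).const_sub 1
    have w1 : HasDerivAt (fun t : ℝ => W ((1 - t) * r)) (Dfun a ((1 - x) * r) * (-r)) x := by
      have := (Wfun_hasDerivAt ha hs).comp x (by simpa using c1x)
      exact this
    have w2 : HasDerivAt (fun t : ℝ => W (t * r)) (Dfun a (x * r) * r) x :=
      by have := (Wfun_hasDerivAt ha hu).comp x c2x; exact this
    have d1 : HasDerivAt (fun t : ℝ => Dfun a ((1 - t) * r))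
        (DDfun a ((1 - x) * r) * (-r)) x := by
      have := (Dfun_hasDerivAt ha hs).comp x (by simpa using c1x)
      exact this
    have d2 : HasDerivAt (fun t : ℝ => Dfun a (t * r)) (DDfun a (x * r) * r) x :=
      by have := (Dfun_hasDerivAt ha hu).comp x c2x; exact this
    have q1 : HasDerivAt (fun t : ℝ => (-1 : ℝ) * W ((1 - t) * r))
        ((-1) * (Dfun a ((1 - x) * r) * (-r))) x := w1.const_mul (-1)
    have q2 : HasDerivAt (fun t : ℝ => (1 - t) * (Dfun a ((1 - t) * r) * (-r)))
        ((-1) * (Dfun a ((1 - x) * r) * (-r))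
          + (1 - x) * (DDfun a ((1 - x) * r) * (-r) * (-r))) x :=
      l1.mul (d1.mul_const (-r))
    have q3 : HasDerivAt (fun t : ℝ => (1 : ℝ) * W (t * r) + t * (Dfun a (t * r) * r))
        (1 * (Dfun a (x * r) * r) + (1 * (Dfun a (x * r) * r)
          + x * (DDfun a (x * r) * r * r))) x :=
      (w2.const_mul 1).add ((hasDerivAt_id x).mul (d2.mul_const r))
    have q4 : HasDerivAt (fun t : ℝ => (1 * (1 - t) + t * (-1)) / 2 * a ^ 2 * r ^ 2)
        (-(a ^ 2 * r ^ 2)) x := by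
      have base : HasDerivAt (fun t : ℝ => (1 * (1 - t) + t * (-1)) / 2 * a ^ 2 * r ^ 2)
          ((1 * (-1) + (-1)) / 2 * a ^ 2 * r ^ 2) x := by
        have h5 : HasDerivAt (fun t : ℝ => 1 * (1 - t) + t * (-1)) (1 * (-1) + (-1)) x := by
          have := (l1.const_mul 1).add ((hasDerivAt_id x).mul_const (-1))
          simpa [Pi.add_def] using this
        exact ((h5.div_const 2).mul_const (a ^ 2)).mul_const (r ^ 2)
      convert base using 1
      ring
    have := ((q1.add q2).add q3).add q4
    exact this
  have hF2le : ∀ x ∈ interior (Set.Icc (0:ℝ) 1), F2 x ≤ 0 := by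
    intro x hx
    obtain ⟨hx0, hx1⟩ := hmem x hx
    have hs : 0 < (1 - x) * r := mul_pos (by linarith) hr
    have hu : 0 < x * r := mul_pos hx0 hr
    have b1 := Dfun_bound ha hs
    have b2 := Dfun_bound ha hu
    have e1 : r * (2 * Dfun a ((1 - x) * r) + ((1 - x) * r) * DDfun a ((1 - x) * r))
        ≤ r * (a ^ 2 * ((1 - x) * r)) := mul_le_mul_of_nonneg_left b1 hr.le
    have e2 : r * (2 * Dfun a (x * r) + (x * r) * DDfun a (x * r))
        ≤ r * (a ^ 2 * (x * r)) := mul_le_mul_of_nonneg_left b2 hr.le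
    simp only [hF2_def]
    nlinarith [e1, e2]
  have hFcont : ContinuousOn F (Set.Icc (0:ℝ) 1) := by
    apply Continuous.continuousOn
    have hWc : Continuous W := Wfun_continuous ha
    fun_prop
  have hconc : ConcaveOn ℝ (Set.Icc (0:ℝ) 1) F := by
    apply concaveOn_of_hasDerivWithinAt2_nonpos (convex_Icc 0 1) hFcont
      (fun x hx => (hderiv1 x hx).hasDerivWithinAt)
      (fun x hx => (hderiv2 x hx).hasDerivWithinAt)
      hF2le
  have key := hconc.2 (Set.left_mem_Icc.2 (by norm_num)) (Set.right_mem_Icc.2 (by norm_num))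
    (by linarith : (0:ℝ) ≤ 1 - t) ht0 (by ring : (1 - t) + t = 1)
  have hline : (1 - t) • (0:ℝ) + t • (1:ℝ) = t := by simp
  rw [hline] at key
  have hF0 : F 0 = W r := by
    simp only [hF_def]
    norm_num
  have hF1v : F 1 = W r := by
    simp only [hF_def]
    norm_num
  rw [hF0, hF1v] at key
  have key2 : W r ≤ F t := by
    have : (1 - t) * W r + t * W r = W r := by ring
    rw [smul_eq_mul, smul_eq_mul, this] at key
    exact key
  rw [hlogS, hlogS, hlogS, hka]
  simp only [hF_def] at key2
  nlinarith [key2]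
end

section
/- For t ∈ [0,1] and s ≥ 0, letting f(s) = log(sinh(s)/s) (with f(0) = 0), one has (1−t)·f((1−t)s) + t·f(ts) − f(s) ≥ −(t(1−t)/2)·s². -/
open Real Set

lemma aux_sinh_le (u : ℝ) (hu : 0 ≤ u) : Real.sinh u ≤ u * Real.cosh u := by
  have mono : MonotoneOn (fun x : ℝ => x * Real.cosh x - Real.sinh x) (Set.Ici 0) := by
    apply monotoneOn_of_hasDerivWithinAt_nonneg (f' := fun x => x * Real.sinh x) (convex_Ici 0)
    · intro x hx
      exact (((hasDerivAt_id x).mul (Real.hasDerivAt_cosh x)).sub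
        (Real.hasDerivAt_sinh x)).continuousAt.continuousWithinAt
    · intro x hx
      have h := ((hasDerivAt_id x).mul (Real.hasDerivAt_cosh x)).sub (Real.hasDerivAt_sinh x)
      have h2 : HasDerivAt (fun x : ℝ => x * Real.cosh x - Real.sinh x) (x * Real.sinh x) x := by
        refine h.congr_deriv ?_; simp only [id_eq]; ring
      exact h2.hasDerivWithinAt
    · intro x hx
      rw [interior_Ici, Set.mem_Ioi] at hx
      have : 0 ≤ Real.sinh x := le_of_lt (by rwa [Real.sinh_pos_iff])
      positivity
  have := mono (Set.self_mem_Ici) (Set.mem_Ici.2 hu) hu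
  simp only [Real.cosh_zero, Real.sinh_zero, mul_one, zero_mul, sub_zero, zero_sub,
    neg_nonpos] at this
  linarith [this]

lemma aux_coth_bound (u : ℝ) (hu : 0 ≤ u) :
    u * Real.cosh u ≤ (1 + u ^ 2 / 3) * Real.sinh u := by
  have mono : MonotoneOn (fun x : ℝ => (1 + x ^ 2 / 3) * Real.sinh x - x * Real.cosh x)
      (Set.Ici 0) := by
    apply monotoneOn_of_hasDerivWithinAt_nonneg
      (f' := fun x => x / 3 * (x * Real.cosh x - Real.sinh x)) (convex_Ici 0)
    · intro x hx
      have h := ((((hasDerivAt_pow 2 x).div_const 3).const_add 1).mul (Real.hasDerivAt_sinh x)).sub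
        ((hasDerivAt_id x).mul (Real.hasDerivAt_cosh x))
      exact h.continuousAt.continuousWithinAt
    · intro x hx
      have h := ((((hasDerivAt_pow 2 x).div_const 3).const_add 1).mul (Real.hasDerivAt_sinh x)).sub
        ((hasDerivAt_id x).mul (Real.hasDerivAt_cosh x))
      have h2 : HasDerivAt (fun x : ℝ => (1 + x ^ 2 / 3) * Real.sinh x - x * Real.cosh x)
          (x / 3 * (x * Real.cosh x - Real.sinh x)) x := by
        refine h.congr_deriv ?_; simp only [id_eq]; push_cast; ring
      exact h2.hasDerivWithinAt
    · intro x hx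
      rw [interior_Ici, Set.mem_Ioi] at hx
      have h1 := aux_sinh_le x hx.le
      have : (0:ℝ) ≤ x / 3 := by linarith
      nlinarith
  have := mono (Set.self_mem_Ici) (Set.mem_Ici.2 hu) hu
  simp only [Real.cosh_zero, Real.sinh_zero, mul_zero, mul_one, zero_mul, sub_zero] at this
  linarith [this]

lemma aux_phi_antitone :
    AntitoneOn (fun u : ℝ => Real.log (Real.sinh u) - Real.log u - u ^ 2 / 6) (Set.Ioi 0) := by
  apply antitoneOn_of_hasDerivWithinAt_nonpos
    (f' := fun u => Real.cosh u / Real.sinh u - u⁻¹ - u / 3) (convex_Ioi 0)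
  · intro x hx
    rw [Set.mem_Ioi] at hx
    have hsp : 0 < Real.sinh x := by rwa [Real.sinh_pos_iff]
    have h := (((Real.hasDerivAt_sinh x).log hsp.ne').sub
      (Real.hasDerivAt_log hx.ne')).sub ((hasDerivAt_pow 2 x).div_const 6)
    exact h.continuousAt.continuousWithinAt
  · intro x hx
    rw [interior_Ioi, Set.mem_Ioi] at hx
    have hsp : 0 < Real.sinh x := by rwa [Real.sinh_pos_iff]
    have h := (((Real.hasDerivAt_sinh x).log hsp.ne').sub
      (Real.hasDerivAt_log hx.ne')).sub ((hasDerivAt_pow 2 x).div_const 6)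
    have h2 : HasDerivAt (fun u : ℝ => Real.log (Real.sinh u) - Real.log u - u ^ 2 / 6)
        (Real.cosh x / Real.sinh x - x⁻¹ - x / 3) x := by
      refine h.congr_deriv ?_; push_cast; ring
    exact h2.hasDerivWithinAt
  · intro x hx
    rw [interior_Ioi, Set.mem_Ioi] at hx
    have hsp : 0 < Real.sinh x := by rwa [Real.sinh_pos_iff]
    have hb := aux_coth_bound x hx.le
    have h1 : Real.cosh x / Real.sinh x ≤ (1 + x ^ 2 / 3) / x := by
      rw [div_le_div_iff₀ hsp hx]
      nlinarith
    have h2 : (1 + x ^ 2 / 3) / x = x⁻¹ + x / 3 := by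
      field_simp
    linarith [h1, h2.le]

lemma aux_key (a s : ℝ) (ha : 0 < a) (has : a ≤ s) :
    Real.log (Real.sinh s / s) - Real.log (Real.sinh a / a) ≤ s ^ 2 / 6 - a ^ 2 / 6 := by
  have hs : 0 < s := lt_of_lt_of_le ha has
  have hsa : 0 < Real.sinh a := by rwa [Real.sinh_pos_iff]
  have hss : 0 < Real.sinh s := by rwa [Real.sinh_pos_iff]
  have h := aux_phi_antitone (Set.mem_Ioi.2 ha) (Set.mem_Ioi.2 hs) has
  rw [Real.log_div hss.ne' hs.ne', Real.log_div hsa.ne' ha.ne']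
  simp only at h
  linarith

theorem stmt10 (t s : ℝ) (ht : t ∈ Set.Icc (0 : ℝ) 1) (hs : 0 ≤ s)
    (f : ℝ → ℝ) (hf : f = fun u => if u = 0 then 0 else Real.log (Real.sinh u / u)) :
    (1 - t) * f ((1 - t) * s) + t * f (t * s) - f s ≥ -(t * (1 - t) / 2) * s ^ 2 := by
  obtain ⟨ht0, ht1⟩ := ht
  rcases eq_or_lt_of_le hs with hs0 | hs0
  · subst hf; simp [← hs0]
  rcases eq_or_lt_of_le ht0 with h0 | h0
  · subst hf; simp [← h0]
  rcases eq_or_lt_of_le ht1 with h1 | h1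
  · subst hf; simp [h1]
  -- now 0 < t < 1, 0 < s
  have ha : 0 < (1 - t) * s := by nlinarith
  have hb : 0 < t * s := by nlinarith
  have has : (1 - t) * s ≤ s := by nlinarith
  have hbs : t * s ≤ s := by nlinarith
  have h1 := aux_key ((1 - t) * s) s ha has
  have h2 := aux_key (t * s) s hb hbs
  have hfa : f ((1 - t) * s) = Real.log (Real.sinh ((1 - t) * s) / ((1 - t) * s)) := by
    rw [hf]; simp [ha.ne']
  have hfb : f (t * s) = Real.log (Real.sinh (t * s) / (t * s)) := by
    rw [hf]; simp [hb.ne']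
  have hfs : f s = Real.log (Real.sinh s / s) := by
    rw [hf]; simp [hs0.ne']
  rw [hfa, hfb, hfs]
  nlinarith [mul_le_mul_of_nonneg_left h1 (by linarith : (0:ℝ) ≤ 1 - t),
    mul_le_mul_of_nonneg_left h2 ht0]
end
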